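/- For every real M > 1, the two-dimensional Lebesgue measure of the set { (x, y) ∈ (0,1) × (0,1) : y(1 − y) / (x + y − 2xy − 1)² > M } equals (1/2)·ln((M − 1)/(M + 1)) + (1/(2√M))·ln((√M + 1)/(√M − 1)). -/

import Mathlib

open Set MeasureTheory

noncomputable def ell (M y : ℝ) : ℝ :=
  (Real.sqrt (y * (1 - y)) / Real.sqrt M - (1 - y)) / (2 * y - 1)

lemma slice_high {M y : ℝ} (hM : 1 < M) (hy : y ∈ Ioo (1/2 : ℝ) 1) :
    {x : ℝ | y ∈ Ioo (0:ℝ) 1 ∧ x ∈ Ioo (0:ℝ) 1 ∧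
        y * (1 - y) / (x + y - 2 * x * y - 1) ^ 2 > M} = Ioo 0 (ell M y) := by
  obtain ⟨hy2, hy1⟩ := hy
  have hy0 : (0:ℝ) < y := by linarith
  have hyy : 0 < y * (1 - y) := by nlinarith
  have hMpos : (0:ℝ) < M := by linarith
  set c : ℝ := Real.sqrt (y * (1 - y)) / Real.sqrt M with hc
  have hcpos : 0 < c := div_pos (Real.sqrt_pos.mpr hyy) (Real.sqrt_pos.mpr hMpos)
  have hc2 : M * c ^ 2 = y * (1 - y) := by
    rw [hc, div_pow, Real.sq_sqrt hyy.le, Real.sq_sqrt hMpos.le]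
    field_simp
  have hcy : c < y := by
    have h2 : c ^ 2 < y ^ 2 := by nlinarith
    nlinarith
  have hden : (0:ℝ) < 2 * y - 1 := by linarith
  ext x
  simp only [mem_setOf_eq, mem_Ioo, gt_iff_lt]
  constructor
  · rintro ⟨_, ⟨hx0, hx1⟩, hcond⟩
    have hd : x + y - 2 * x * y - 1 < 0 := by nlinarith
    have hd2pos : 0 < (x + y - 2 * x * y - 1) ^ 2 := by nlinarith
    have h1 : M * (x + y - 2 * x * y - 1) ^ 2 < y * (1 - y) :=
      (lt_div_iff₀ hd2pos).mp hcond
    have h2 : (x + y - 2 * x * y - 1) ^ 2 < c ^ 2 := by nlinarith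
    have h3 : -c < x + y - 2 * x * y - 1 := by nlinarith
    refine ⟨hx0, ?_⟩
    rw [ell, lt_div_iff₀ hden]
    nlinarith
  · rintro ⟨hx0, hxl⟩
    have hell1 : ell M y < 1 := by
      rw [ell, div_lt_one hden]; linarith
    have hx1 : x < 1 := hxl.trans hell1
    have hd : x + y - 2 * x * y - 1 < 0 := by nlinarith
    have hxe : x * (2 * y - 1) < c - (1 - y) := by
      have := (lt_div_iff₀ hden).mp (by rw [ell] at hxl; exact hxl)
      linarith
    have h3 : -c < x + y - 2 * x * y - 1 := by nlinarith
    have h2 : (x + y - 2 * x * y - 1) ^ 2 < c ^ 2 :=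
      sq_lt_sq' h3 (by linarith)
    have hd2pos : 0 < (x + y - 2 * x * y - 1) ^ 2 := by nlinarith
    refine ⟨⟨hy0, hy1⟩, ⟨hx0, hx1⟩, ?_⟩
    rw [lt_div_iff₀ hd2pos]
    nlinarith

lemma slice_low {M y : ℝ} (hM : 1 < M) (hy : y ∈ Ioo (0:ℝ) (1/2)) :
    {x : ℝ | y ∈ Ioo (0:ℝ) 1 ∧ x ∈ Ioo (0:ℝ) 1 ∧
        y * (1 - y) / (x + y - 2 * x * y - 1) ^ 2 > M}
      = Ioo (1 - ell M (1 - y)) 1 := by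
  have hy' : (1 - y) ∈ Ioo (1/2 : ℝ) 1 := ⟨by linarith [hy.1, hy.2], by linarith [hy.1]⟩
  have key := slice_high hM hy'
  ext x
  have hmem : x ∈ {x : ℝ | y ∈ Ioo (0:ℝ) 1 ∧ x ∈ Ioo (0:ℝ) 1 ∧
      y * (1 - y) / (x + y - 2 * x * y - 1) ^ 2 > M} ↔
      (1 - x) ∈ {x : ℝ | (1 - y) ∈ Ioo (0:ℝ) 1 ∧ x ∈ Ioo (0:ℝ) 1 ∧
      (1 - y) * (1 - (1 - y)) / (x + (1 - y) - 2 * x * (1 - y) - 1) ^ 2 > M} := by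
    simp only [mem_setOf_eq, mem_Ioo]
    constructor
    · rintro ⟨⟨a1, a2⟩, ⟨b1, b2⟩, h⟩
      refine ⟨⟨by linarith, by linarith⟩, ⟨by linarith, by linarith⟩, ?_⟩
      have e1 : (1 - y) * (1 - (1 - y)) = y * (1 - y) := by ring
      have e2 : ((1 - x) + (1 - y) - 2 * (1 - x) * (1 - y) - 1) ^ 2
          = (x + y - 2 * x * y - 1) ^ 2 := by ring
      rw [e1, e2]; exact h
    · rintro ⟨⟨a1, a2⟩, ⟨b1, b2⟩, h⟩
      refine ⟨⟨by linarith, by linarith⟩, ⟨by linarith, by linarith⟩, ?_⟩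
      have e1 : (1 - y) * (1 - (1 - y)) = y * (1 - y) := by ring
      have e2 : ((1 - x) + (1 - y) - 2 * (1 - x) * (1 - y) - 1) ^ 2
          = (x + y - 2 * x * y - 1) ^ 2 := by ring
      rw [e1, e2] at h; exact h
  rw [mem_setOf_eq] at hmem ⊢
  rw [hmem]
  have : (1 - x) ∈ {x : ℝ | (1 - y) ∈ Ioo (0:ℝ) 1 ∧ x ∈ Ioo (0:ℝ) 1 ∧
      (1 - y) * (1 - (1 - y)) / (x + (1 - y) - 2 * x * (1 - y) - 1) ^ 2 > M}
      ↔ (1 - x) ∈ Ioo (0:ℝ) (ell M (1 - y)) := by rw [key]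
  rw [this]
  simp only [mem_Ioo]
  constructor
  · rintro ⟨h1, h2⟩; exact ⟨by linarith, by linarith⟩
  · rintro ⟨h1, h2⟩; exact ⟨by linarith, by linarith⟩

lemma slice_empty {M y : ℝ} (hM : 1 < M) (hy : y ∉ Ioo (0:ℝ) 1 ∨ y = 1/2) :
    {x : ℝ | y ∈ Ioo (0:ℝ) 1 ∧ x ∈ Ioo (0:ℝ) 1 ∧
        y * (1 - y) / (x + y - 2 * x * y - 1) ^ 2 > M} = ∅ := by
  ext x
  simp only [mem_setOf_eq, mem_empty_iff_false, iff_false, not_and, gt_iff_lt]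
  rcases hy with hy | hy
  · intro h; exact absurd h hy
  · subst hy
    rintro - hx
    have e : (x + 1/2 - 2 * x * (1/2) - 1) ^ 2 = (1/4 : ℝ) := by ring
    rw [e]
    norm_num
    linarith

noncomputable def FF (M y : ℝ) : ℝ :=
  1 / (4 * Real.sqrt M) *
      (2 * Real.sqrt (y * (1 - y)) - Real.log (1 + 2 * Real.sqrt (y * (1 - y)))
        + Real.log (2 * y - 1))
    + y / 2 - 1 / 4 * Real.log (2 * y - 1)

lemma FF_deriv {M y : ℝ} (hM : 1 < M) (hy : y ∈ Ioo (1/2 : ℝ) 1) :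
    HasDerivAt (FF M) (ell M y) y := by
  obtain ⟨hy2, hy1⟩ := hy
  have hy0 : (0:ℝ) < y := by linarith
  have hyy : 0 < y * (1 - y) := by nlinarith
  have hMpos : (0:ℝ) < M := by linarith
  have hr : 0 < Real.sqrt M := Real.sqrt_pos.mpr hMpos
  set s : ℝ := Real.sqrt (y * (1 - y)) with hs
  have hspos : 0 < s := Real.sqrt_pos.mpr hyy
  have hs2 : s ^ 2 = y * (1 - y) := Real.sq_sqrt hyy.le
  have hden : (0:ℝ) < 2 * y - 1 := by linarith
  have hpoly : HasDerivAt (fun y : ℝ => y * (1 - y)) (1 - 2 * y) y := by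
    have h := ((hasDerivAt_id' y).mul ((hasDerivAt_const y (1:ℝ)).sub (hasDerivAt_id' y)))
    exact h.congr_deriv (by simp only [Pi.sub_apply]; ring)
  have hsqrt : HasDerivAt (fun y : ℝ => Real.sqrt (y * (1 - y)))
      ((1 - 2 * y) / (2 * s)) y := hpoly.sqrt hyy.ne'
  have hlog1 : HasDerivAt (fun y : ℝ => Real.log (1 + 2 * Real.sqrt (y * (1 - y))))
      ((2 * ((1 - 2 * y) / (2 * s))) / (1 + 2 * s)) y := by
    have hin : HasDerivAt (fun y : ℝ => 1 + 2 * Real.sqrt (y * (1 - y)))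
        (2 * ((1 - 2 * y) / (2 * s))) y := by
      exact (hsqrt.const_mul 2).const_add 1
    exact hin.log (by positivity)
  have hlog2 : HasDerivAt (fun y : ℝ => Real.log (2 * y - 1)) (2 / (2 * y - 1)) y := by
    have hin : HasDerivAt (fun y : ℝ => 2 * y - 1) 2 y := by
      exact (((hasDerivAt_id' y).const_mul 2).sub_const 1).congr_deriv (by ring)
    exact hin.log hden.ne'
  have hmain : HasDerivAt (FF M)
      (1 / (4 * Real.sqrt M) *
        (2 * ((1 - 2 * y) / (2 * s)) - (2 * ((1 - 2 * y) / (2 * s))) / (1 + 2 * s)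
          + 2 / (2 * y - 1))
        + 1 / 2 - 1 / 4 * (2 / (2 * y - 1))) y := by
    exact ((((((hsqrt.const_mul 2).sub hlog1).add hlog2).const_mul
        (1 / (4 * Real.sqrt M))).add
        (by simpa using (hasDerivAt_id y).div_const 2)).sub
        (hlog2.const_mul (1/4)))
  convert hmain using 1
  rw [ell, show Real.sqrt (y * (1 - y)) = s from rfl]
  have h1 : (1 + 2 * s) ≠ 0 := by positivity
  have hd' : 2 * y - 1 ≠ 0 := hden.ne'
  have hr' : Real.sqrt M ≠ 0 := hr.ne'
  have hs' : s ≠ 0 := hspos.ne'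
  have key : (1 / (4 * Real.sqrt M) *
        (2 * ((1 - 2 * y) / (2 * s)) - (2 * ((1 - 2 * y) / (2 * s))) / (1 + 2 * s)
          + 2 / (2 * y - 1))
        + 1 / 2 - 1 / 4 * (2 / (2 * y - 1))) - (s / Real.sqrt M - (1 - y)) / (2 * y - 1)
      = (s ^ 2 - y * (1 - y)) * (-2 / (Real.sqrt M * (1 + 2 * s) * (2 * y - 1))) := by
    field_simp
    ring
  rw [hs2, sub_self, zero_mul] at key
  linarith

lemma integral_ell {M : ℝ} (hM : 1 < M) :
    ∫ y in (M / (M + 1))..1, ell M y = FF M 1 - FF M (M / (M + 1)) := by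
  have hM1 : (0:ℝ) < M + 1 := by linarith
  have hy0half : (1/2 : ℝ) < M / (M + 1) := by
    rw [div_lt_div_iff₀ (by norm_num) hM1]; linarith
  have hy01 : M / (M + 1) < 1 := by rw [div_lt_one hM1]; linarith
  have hle : M / (M + 1) ≤ 1 := hy01.le
  have hposIcc : ∀ y ∈ Icc (M / (M + 1)) 1, (0:ℝ) < 2 * y - 1 := fun y hy => by
    have := hy.1; nlinarith
  have hcont_s : Continuous fun y : ℝ => Real.sqrt (y * (1 - y)) := by
    exact Real.continuous_sqrt.comp (by continuity)
  have hcontF : ContinuousOn (FF M) (Icc (M / (M + 1)) 1) := by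
    unfold FF
    refine ContinuousOn.sub (ContinuousOn.add (ContinuousOn.mul continuousOn_const ?_)
      (by fun_prop)) (ContinuousOn.mul continuousOn_const ?_)
    · refine ContinuousOn.add (ContinuousOn.sub (by fun_prop) ?_) ?_
      · refine ContinuousOn.log (by fun_prop) fun y hy => ?_
        have := Real.sqrt_nonneg (y * (1 - y)); positivity
      · exact ContinuousOn.log (by fun_prop) fun y hy => (hposIcc y hy).ne'
    · exact ContinuousOn.log (by fun_prop) fun y hy => (hposIcc y hy).ne'
  have hcontl : ContinuousOn (ell M) (Icc (M / (M + 1)) 1) := by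
    unfold ell
    exact ContinuousOn.div (by fun_prop) (by fun_prop)
      fun y hy => (hposIcc y hy).ne'
  refine intervalIntegral.integral_eq_sub_of_hasDeriv_right_of_le hle hcontF
    (fun y hy => ((FF_deriv hM ⟨hy0half.trans hy.1, hy.2⟩).hasDerivWithinAt)) ?_
  exact (hcontl.mono (by rw [uIcc_of_le hle])).intervalIntegrable

lemma FF_value {M : ℝ} (hM : 1 < M) :
    2 * (FF M 1 - FF M (M / (M + 1))) =
      1 / 2 * Real.log ((M - 1) / (M + 1)) +
        1 / (2 * Real.sqrt M) * Real.log ((Real.sqrt M + 1) / (Real.sqrt M - 1)) := by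
  have hM1 : (0:ℝ) < M + 1 := by linarith
  set r := Real.sqrt M with hrdef
  have hr1 : 1 < r := by
    rw [hrdef, show (1:ℝ) = Real.sqrt 1 by simp]
    exact Real.sqrt_lt_sqrt (by norm_num) hM
  have hr2 : r ^ 2 = M := Real.sq_sqrt (by linarith)
  have hFF1 : FF M 1 = 1 / 2 := by norm_num [FF]
  have ha : (M / (M + 1)) * (1 - M / (M + 1)) = M / (M + 1) ^ 2 := by
    field_simp
    ring
  have hsq : Real.sqrt (M / (M + 1) ^ 2) = r / (M + 1) := by
    rw [Real.sqrt_div (by linarith : (0:ℝ) ≤ M), Real.sqrt_sq hM1.le]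
  have h2y : 2 * (M / (M + 1)) - 1 = (M - 1) / (M + 1) := by field_simp; ring
  have h1p : 1 + 2 * (r / (M + 1)) = (r + 1) ^ 2 / (M + 1) := by
    field_simp; linear_combination -hr2
  have hlog1 : Real.log ((r + 1) ^ 2 / (M + 1)) = 2 * Real.log (r + 1) - Real.log (M + 1) := by
    rw [Real.log_div (by positivity) hM1.ne', Real.log_pow]; push_cast; ring
  have hlogm : Real.log ((M - 1) / (M + 1))
      = Real.log (r - 1) + Real.log (r + 1) - Real.log (M + 1) := by
    rw [show M - 1 = (r - 1) * (r + 1) by linear_combination -hr2,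
      Real.log_div (mul_ne_zero (by linarith) (by linarith)) hM1.ne',
      Real.log_mul (by linarith) (by linarith)]
  have hlogq : Real.log ((r + 1) / (r - 1)) = Real.log (r + 1) - Real.log (r - 1) :=
    Real.log_div (by linarith) (by linarith)
  have hFFy0 : FF M (M / (M + 1)) =
      1 / (4 * r) * (2 * (r / (M + 1)) - (2 * Real.log (r + 1) - Real.log (M + 1))
        + (Real.log (r - 1) + Real.log (r + 1) - Real.log (M + 1)))
      + (M / (M + 1)) / 2 - 1 / 4 * (Real.log (r - 1) + Real.log (r + 1) - Real.log (M + 1)) := by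
    rw [FF, ha, hsq, h2y, h1p, hlog1, hlogm]
  rw [hFF1, hFFy0, hlogm, hlogq]
  have hrne : r ≠ 0 := by linarith
  field_simp
  ring

lemma integral_ell' {M : ℝ} (hM : 1 < M) :
    ∫ y in (M / (M + 1))..1, ell M y = (1 / 2 * Real.log ((M - 1) / (M + 1)) +
        1 / (2 * Real.sqrt M) * Real.log ((Real.sqrt M + 1) / (Real.sqrt M - 1))) / 2 := by
  rw [integral_ell hM]
  linarith [FF_value hM]

/-- Proposition 2.6: the area of the Bradley–Terry `M`-sensitive region
`Ω_M(p_ij, p_ik)` is `½ ln((M−1)/(M+1)) + (1/(2√M)) ln((√M+1)/(√M−1))`. -/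
theorem stmt_9 (M : ℝ) (hM : 1 < M) :
    volume {p : ℝ × ℝ | p.1 ∈ Ioo (0 : ℝ) 1 ∧ p.2 ∈ Ioo (0 : ℝ) 1 ∧
        p.2 * (1 - p.2) / (p.1 + p.2 - 2 * p.1 * p.2 - 1) ^ 2 > M} =
      ENNReal.ofReal
        (1 / 2 * Real.log ((M - 1) / (M + 1)) +
          1 / (2 * Real.sqrt M) * Real.log ((Real.sqrt M + 1) / (Real.sqrt M - 1))) := by
  have hM1 : (0:ℝ) < M + 1 := by linarith
  have hy0half : (1/2 : ℝ) < M / (M + 1) := by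
    rw [div_lt_div_iff₀ (by norm_num) hM1]; linarith
  have hy01 : M / (M + 1) < 1 := by rw [div_lt_one hM1]; linarith
  set T : Set (ℝ × ℝ) := {q : ℝ × ℝ | q.1 ∈ Ioo (0:ℝ) 1 ∧ q.2 ∈ Ioo (0:ℝ) 1 ∧
      q.1 * (1 - q.1) / (q.2 + q.1 - 2 * q.2 * q.1 - 1) ^ 2 > M} with hT
  have hmeasf : Measurable fun q : ℝ × ℝ =>
      q.1 * (1 - q.1) / (q.2 + q.1 - 2 * q.2 * q.1 - 1) ^ 2 := by fun_prop
  have hTmeas : MeasurableSet T := by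
    have : T = (Prod.fst ⁻¹' Ioo (0:ℝ) 1) ∩ ((Prod.snd ⁻¹' Ioo (0:ℝ) 1) ∩
        {q : ℝ × ℝ | M < q.1 * (1 - q.1) / (q.2 + q.1 - 2 * q.2 * q.1 - 1) ^ 2}) := by
      ext q; simp [hT, and_assoc]
    rw [this]
    exact (measurable_fst measurableSet_Ioo).inter
      ((measurable_snd measurableSet_Ioo).inter (measurableSet_lt measurable_const hmeasf))
  have hswap : Prod.swap ⁻¹' T = {p : ℝ × ℝ | p.1 ∈ Ioo (0 : ℝ) 1 ∧ p.2 ∈ Ioo (0 : ℝ) 1 ∧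
      p.2 * (1 - p.2) / (p.1 + p.2 - 2 * p.1 * p.2 - 1) ^ 2 > M} := by
    ext ⟨x, y⟩
    simp only [hT, mem_preimage, Prod.swap_prod_mk, mem_setOf_eq]
    constructor
    · rintro ⟨h1, h2, h3⟩
      refine ⟨h2, h1, ?_⟩
      convert h3 using 3 <;> ring
    · rintro ⟨h1, h2, h3⟩
      refine ⟨h2, h1, ?_⟩
      convert h3 using 3 <;> ring
  have hvol : volume {p : ℝ × ℝ | p.1 ∈ Ioo (0 : ℝ) 1 ∧ p.2 ∈ Ioo (0 : ℝ) 1 ∧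
      p.2 * (1 - p.2) / (p.1 + p.2 - 2 * p.1 * p.2 - 1) ^ 2 > M} = volume T := by
    rw [← hswap, Measure.volume_eq_prod]
    exact Measure.measurePreserving_swap.measure_preimage hTmeas.nullMeasurableSet
  rw [hvol, Measure.volume_eq_prod, Measure.prod_apply hTmeas]
  have hslice : ∀ y : ℝ, (Prod.mk y ⁻¹' T) = {x : ℝ | y ∈ Ioo (0:ℝ) 1 ∧ x ∈ Ioo (0:ℝ) 1 ∧
      y * (1 - y) / (x + y - 2 * x * y - 1) ^ 2 > M} := by
    intro y; rfl
  have hslicevol : ∀ y : ℝ, volume (Prod.mk y ⁻¹' T) =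
      (Ioo (1/2:ℝ) 1).indicator (fun y => ENNReal.ofReal (ell M y)) y +
      (Ioo (0:ℝ) (1/2)).indicator (fun y => ENNReal.ofReal (ell M (1 - y))) y := by
    intro y
    rw [hslice]
    rcases lt_trichotomy y (1/2 : ℝ) with h | h | h
    · rcases le_or_gt y 0 with h0 | h0
      · rw [slice_empty hM (Or.inl (by simp only [mem_Ioo, not_and, not_lt]; intro h'; linarith))]
        rw [indicator_of_notMem (by simp only [mem_Ioo, not_and, not_lt]; intro h'; linarith),
          indicator_of_notMem (by simp only [mem_Ioo, not_and, not_lt]; intro h'; linarith)]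
        simp
      · rw [slice_low hM ⟨h0, h⟩, Real.volume_Ioo,
          indicator_of_notMem (by simp only [mem_Ioo, not_and, not_lt]; intro h'; linarith),
          indicator_of_mem (mem_Ioo.mpr ⟨h0, h⟩)]
        rw [zero_add]; congr 1; ring
    · rw [slice_empty hM (Or.inr h),
        indicator_of_notMem (by simp [mem_Ioo, h]),
        indicator_of_notMem (by simp [mem_Ioo, h])]
      simp
    · rcases lt_or_ge y 1 with h1 | h1
      · rw [slice_high hM ⟨h, h1⟩, Real.volume_Ioo,
          indicator_of_mem (mem_Ioo.mpr ⟨h, h1⟩),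
          indicator_of_notMem (by simp only [mem_Ioo, not_and, not_lt]; intro h'; linarith)]
        rw [add_zero]; congr 1; ring
      · rw [slice_empty hM (Or.inl (by simp only [mem_Ioo, not_and, not_lt]; intro h'; linarith)),
          indicator_of_notMem (by simp only [mem_Ioo, not_and, not_lt]; intro h'; linarith),
          indicator_of_notMem (by simp only [mem_Ioo, not_and, not_lt]; intro h'; linarith)]
        simp
  simp_rw [hslicevol]
  have hellmeas : Measurable fun y => ENNReal.ofReal (ell M y) := by
    apply Measurable.ennreal_ofReal; unfold ell; fun_prop
  have hellmeas' : Measurable fun y => ENNReal.ofReal (ell M (1 - y)) := by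
    apply Measurable.ennreal_ofReal; unfold ell; fun_prop
  rw [lintegral_add_left (hellmeas.indicator measurableSet_Ioo),
    lintegral_indicator measurableSet_Ioo _, lintegral_indicator measurableSet_Ioo _]
  -- change of variables in second integral
  have hmp : MeasurePreserving (fun y : ℝ => 1 - y) volume volume := by
    have h1 := Measure.measurePreserving_neg (volume : Measure ℝ)
    have h2 := measurePreserving_add_left (volume : Measure ℝ) 1
    convert h2.comp h1 using 1
    funext y
    simp [sub_eq_add_neg]
  have hemb : MeasurableEmbedding (fun y : ℝ => 1 - y) := by
    have := (MeasurableEquiv.subLeft (1:ℝ)).measurableEmbedding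
    convert this using 1
    rfl
  have hpre : (fun y : ℝ => 1 - y) ⁻¹' (Ioo (1/2:ℝ) 1) = Ioo (0:ℝ) (1/2) := by
    ext y; simp only [mem_preimage, mem_Ioo]
    constructor <;> rintro ⟨a, b⟩ <;> constructor <;> linarith
  have hcv : ∫⁻ y in Ioo (0:ℝ) (1/2), ENNReal.ofReal (ell M (1 - y))
      = ∫⁻ y in Ioo (1/2:ℝ) 1, ENNReal.ofReal (ell M y) := by
    rw [← hpre]
    exact hmp.setLIntegral_comp_preimage_emb hemb (fun t => ENNReal.ofReal (ell M t)) _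
  rw [hcv, ← two_mul]
  -- split the interval at M/(M+1)
  have hsplit : Ioo (1/2:ℝ) 1 = Ioc (1/2:ℝ) (M/(M+1)) ∪ Ioo (M/(M+1)) 1 := by
    ext y; simp only [mem_Ioo, mem_Ioc, mem_union]
    constructor
    · rintro ⟨a, b⟩
      rcases le_or_gt y (M/(M+1)) with h | h
      · exact Or.inl ⟨a, h⟩
      · exact Or.inr ⟨h, b⟩
    · rintro (⟨a, b⟩ | ⟨a, b⟩)
      · exact ⟨a, by linarith⟩
      · exact ⟨by linarith, b⟩
  have hdisj : Disjoint (Ioc (1/2:ℝ) (M/(M+1))) (Ioo (M/(M+1)) 1) := by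
    rw [disjoint_left]
    rintro y ⟨_, h1⟩ ⟨h2, _⟩; linarith
  rw [hsplit, lintegral_union measurableSet_Ioo hdisj]
  have hzero : ∫⁻ y in Ioc (1/2:ℝ) (M/(M+1)), ENNReal.ofReal (ell M y) = 0 := by
    have hz : ∀ y ∈ Ioc (1/2:ℝ) (M/(M+1)), ENNReal.ofReal (ell M y) = (0:ENNReal) := by
      intro y hy
      rw [ENNReal.ofReal_eq_zero]
      obtain ⟨hya, hyb⟩ := hy
      have hy1 : y < 1 := by linarith
      have hden : (0:ℝ) < 2 * y - 1 := by linarith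
      have hle : y * (M + 1) ≤ M := by
        rw [← le_div_iff₀ hM1]; exact hyb
      have h1 : y * (1 - y) / M ≤ (1 - y) ^ 2 := by
        rw [div_le_iff₀ (by linarith : (0:ℝ) < M)]; nlinarith
      have hc : Real.sqrt (y * (1 - y)) / Real.sqrt M ≤ 1 - y :=
        calc Real.sqrt (y * (1 - y)) / Real.sqrt M
            = Real.sqrt (y * (1 - y) / M) :=
              (Real.sqrt_div (by nlinarith : (0:ℝ) ≤ y * (1 - y)) M).symm
          _ ≤ Real.sqrt ((1 - y) ^ 2) := Real.sqrt_le_sqrt h1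
          _ = 1 - y := Real.sqrt_sq (by linarith)
      rw [ell]
      apply div_nonpos_of_nonpos_of_nonneg <;> linarith
    rw [setLIntegral_congr_fun measurableSet_Ioc hz, lintegral_zero]
  rw [hzero, zero_add]
  -- convert to Bochner integral
  have hposIcc : ∀ y ∈ Icc (M / (M + 1)) 1, (0:ℝ) < 2 * y - 1 := fun y hy => by
    have := hy.1; nlinarith
  have hcontl : ContinuousOn (ell M) (Icc (M / (M + 1)) 1) := by
    unfold ell
    exact ContinuousOn.div (by fun_prop) (by fun_prop) fun y hy => (hposIcc y hy).ne'
  have hint : IntegrableOn (ell M) (Ioo (M/(M+1)) 1) volume :=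
    (hcontl.integrableOn_Icc).mono_set Ioo_subset_Icc_self
  have hnn : 0 ≤ᵐ[volume.restrict (Ioo (M/(M+1)) 1)] ell M := by
    refine (ae_restrict_iff' measurableSet_Ioo).mpr (ae_of_all _ fun y hy => ?_)
    obtain ⟨hya, hyb⟩ := hy
    have hden : (0:ℝ) < 2 * y - 1 := by nlinarith
    have hy1 : y < 1 := hyb
    have hle : M ≤ y * (M + 1) := by
      rw [← div_le_iff₀ hM1]; exact hya.le
    have h1 : (1 - y) ^ 2 ≤ y * (1 - y) / M := by
      rw [le_div_iff₀ (by linarith : (0:ℝ) < M)]; nlinarith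
    have hc : 1 - y ≤ Real.sqrt (y * (1 - y)) / Real.sqrt M :=
      calc (1:ℝ) - y = Real.sqrt ((1 - y) ^ 2) := (Real.sqrt_sq (by linarith)).symm
        _ ≤ Real.sqrt (y * (1 - y) / M) := Real.sqrt_le_sqrt h1
        _ = Real.sqrt (y * (1 - y)) / Real.sqrt M :=
            Real.sqrt_div (by nlinarith : (0:ℝ) ≤ y * (1 - y)) M
    show (0:ℝ) ≤ ell M y
    rw [ell]
    apply div_nonneg (by linarith) hden.le
  rw [← ofReal_integral_eq_lintegral_ofReal hint hnn]
  have : ∫ y in Ioo (M/(M+1)) 1, ell M y = ∫ y in (M/(M+1))..1, ell M y := by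
    rw [intervalIntegral.integral_of_le hy01.le, integral_Ioc_eq_integral_Ioo]
  rw [this, integral_ell' hM, ← ENNReal.ofReal_ofNat, ← ENNReal.ofReal_mul (by norm_num)]
  congr 1
  ring
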